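/- Let X, Y be Hilbert spaces, L: X → X a bounded self-adjoint operator, and A: D(A) ⊂ Y → X a densely defined closed operator whose adjoint A* is also densely defined. Suppose there exist δ > 0 and a closed subspace X₊ ⊂ X such that ⟨Lx, x⟩ ≥ δ‖x‖² for all x ∈ X₊ and the orthogonal complement X₊^⊥ is contained in D(A*). Then the operator A*LA, with domain contained in D(A), is self-adjoint on Y. -/

import Mathlib

set_option maxHeartbeats 4000000

open scoped RealInnerProductSpace
open Filter Topology

section AuxAdjointCompSelfAdjoint

private lemma aux_bound_exists
    {X Y : Type*} [NormedAddCommGroup X] [InnerProductSpace ℝ X] [CompleteSpace X]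
    [NormedAddCommGroup Y] [InnerProductSpace ℝ Y] [CompleteSpace Y]
    (A : Y →ₗ.[ℝ] X)
    (hAdense : Dense (A.domain : Set Y))
    (Xp : Submodule ℝ X)
    (hperp : (Xpᗮ : Set X) ⊆ (A.adjoint.domain : Set X)) :
    ∃ K : ℝ, 0 ≤ K ∧ ∀ x : Xpᗮ, ‖A.adjoint (Submodule.inclusion (fun z hz => hperp hz) x)‖ ≤ K * ‖x‖ := by
  have pairing : ∀ (x : A.adjoint.domain) (z : A.domain),
      ⟪A.adjoint x, (z : Y)⟫ = ⟪(x : X), A z⟫ :=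
    LinearPMap.adjoint_isFormalAdjoint hAdense
  set ι : Xpᗮ →ₗ[ℝ] A.adjoint.domain := Submodule.inclusion (fun z hz => hperp hz) with hι
  set β : Xpᗮ →ₗ[ℝ] Y := A.adjoint.toFun.comp ι with hβ
  have hβa : ∀ x : Xpᗮ, β x = A.adjoint (ι x) := fun x => rfl
  haveI : CompleteSpace Xpᗮ := Xp.isClosed_orthogonal.completeSpace_coe
  have hβcont : Continuous β := by
    apply LinearMap.continuous_of_seq_closed_graph
    intro u x y hux huy
    have hcx : Tendsto (fun n => ((u n : Xpᗮ) : X)) atTop (𝓝 (x : X)) :=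
      (continuous_subtype_val.tendsto _).comp hux
    have key : ∀ z : A.domain, ⟪y, (z : Y)⟫ = ⟪(x : X), A z⟫ := by
      intro z
      have h1 : ∀ n, ⟪β (u n), (z : Y)⟫ = ⟪((u n : Xpᗮ) : X), A z⟫ := fun n => pairing (ι (u n)) z
      have l1 : Tendsto (fun n => ⟪β (u n), (z : Y)⟫) atTop (𝓝 ⟪y, (z : Y)⟫) :=
        huy.inner tendsto_const_nhds
      have l2 : Tendsto (fun n => ⟪((u n : Xpᗮ) : X), A z⟫) atTop (𝓝 ⟪(x : X), A z⟫) :=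
        hcx.inner tendsto_const_nhds
      exact tendsto_nhds_unique (by simpa only [h1] using l1) l2
    exact (LinearPMap.adjoint_apply_eq hAdense (ι x) (fun z => key z)).symm
  let Bc : Xpᗮ →L[ℝ] Y := ⟨β, hβcont⟩
  exact ⟨‖Bc‖, Bc.opNorm_nonneg, fun x => Bc.le_opNorm x⟩

private lemma aux_coercivity
    {X Y : Type*} [NormedAddCommGroup X] [InnerProductSpace ℝ X] [CompleteSpace X]
    [NormedAddCommGroup Y] [InnerProductSpace ℝ Y] [CompleteSpace Y]
    (L : X →L[ℝ] X)
    (A : Y →ₗ.[ℝ] X)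
    (hAdense : Dense (A.domain : Set Y))
    (δ : ℝ) (hδ : 0 < δ)
    (Xp : Submodule ℝ X) (hXpClosed : IsClosed (Xp : Set X))
    (hcoer : ∀ x ∈ Xp, δ * ‖x‖ ^ 2 ≤ ⟪L x, x⟫)
    (hperp : (Xpᗮ : Set X) ⊆ (A.adjoint.domain : Set X))
    (K : ℝ) (hK : 0 ≤ K)
    (hβ : ∀ x : Xpᗮ, ‖A.adjoint (Submodule.inclusion (fun z hz => hperp hz) x)‖ ≤ K * ‖x‖) :
    ∃ c : ℝ, 0 ≤ c ∧ ∀ y : A.domain,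
      δ / 2 * ‖A y‖ ^ 2 - c * ‖(y : Y)‖ ^ 2 ≤ ⟪L (A y), A y⟫ := by
  have pairing : ∀ (x : A.adjoint.domain) (z : A.domain),
      ⟪A.adjoint x, (z : Y)⟫ = ⟪(x : X), A z⟫ :=
    LinearPMap.adjoint_isFormalAdjoint hAdense
  haveI : CompleteSpace Xp := hXpClosed.completeSpace_coe
  -- the orthogonal projection bound
  have hQ : ∀ y : A.domain, ‖((Submodule.orthogonalProjectionOnto Xpᗮ (A y) : Xpᗮ) : X)‖ ≤ K * ‖(y : Y)‖ := by
    intro y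
    set q : Xpᗮ := Submodule.orthogonalProjectionOnto Xpᗮ (A y) with hq
    have hmemq : ((q : X)) ∈ Xpᗮ := q.2
    have horth : A y - (q : X) ∈ Xpᗮᗮ := Submodule.sub_starProjection_mem_orthogonal (A y)
    have h1 : ⟪(q : X), A y⟫ = ‖(q : X)‖ ^ 2 := by
      have h0 : ⟪(q : X), A y - (q : X)⟫ = 0 :=
        Submodule.inner_right_of_mem_orthogonal hmemq horth
      have := inner_sub_right (𝕜 := ℝ) (q : X) (A y) (q : X)
      rw [real_inner_self_eq_norm_sq] at this
      linarith [h0 ▸ this]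
    have h2 : ⟪(q : X), A y⟫ = ⟪A.adjoint (Submodule.inclusion (fun z hz => hperp hz) q), (y : Y)⟫ :=
      (pairing (Submodule.inclusion (fun z hz => hperp hz) q) y).symm
    have h3 : ⟪(q : X), A y⟫ ≤ K * ‖(q : X)‖ * ‖(y : Y)‖ := by
      rw [h2]
      calc ⟪A.adjoint (Submodule.inclusion (fun z hz => hperp hz) q), (y : Y)⟫
          ≤ ‖A.adjoint (Submodule.inclusion (fun z hz => hperp hz) q)‖ * ‖(y : Y)‖ :=
            real_inner_le_norm _ _
        _ ≤ K * ‖(q : X)‖ * ‖(y : Y)‖ := by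
            have := hβ q
            have hy0 : (0:ℝ) ≤ ‖(y : Y)‖ := norm_nonneg _
            exact mul_le_mul_of_nonneg_right this hy0
    rcases eq_or_lt_of_le (norm_nonneg ((q : X))) with h | h
    · rw [← h]; positivity
    · nlinarith [h1, h3]
  -- the coercivity estimate
  refine ⟨(δ / 2 + ‖L‖) * K ^ 2 + 2 / δ * ‖L‖ ^ 2 * K ^ 2, by positivity, fun y => ?_⟩
  set a : X := A y with ha
  set q : X := ((Submodule.orthogonalProjectionOnto Xpᗮ a : Xpᗮ) : X) with hqdef
  set p : X := a - q with hp
  have hpa : p + q = a := by simp [hp]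
  have hpXp : p ∈ Xp := by
    have h1 : p ∈ Xpᗮᗮ := Submodule.sub_starProjection_mem_orthogonal a
    rwa [Submodule.orthogonal_orthogonal] at h1
  have hqX : q ∈ Xpᗮ := Subtype.coe_prop _
  have hpq : ⟪p, q⟫ = 0 := Submodule.inner_right_of_mem_orthogonal hpXp (by exact hqX)
  have hqb : ‖q‖ ≤ K * ‖(y : Y)‖ := hQ y
  have hnorm : ‖a‖ ^ 2 = ‖p‖ ^ 2 + ‖q‖ ^ 2 := by
    rw [← hpa, norm_add_sq_real, hpq]; ring
  have hLpp : δ * ‖p‖ ^ 2 ≤ ⟪L p, p⟫ := hcoer p hpXp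
  have expand : ⟪L a, a⟫ = ⟪L p, p⟫ + ⟪L p, q⟫ + ⟪L q, p⟫ + ⟪L q, q⟫ := by
    rw [← hpa]
    simp only [map_add, inner_add_left, inner_add_right]
    ring
  have babs : ∀ u v : X, |⟪L u, v⟫| ≤ ‖L‖ * ‖u‖ * ‖v‖ := by
    intro u v
    calc |⟪L u, v⟫| ≤ ‖L u‖ * ‖v‖ := abs_real_inner_le_norm _ _
      _ ≤ ‖L‖ * ‖u‖ * ‖v‖ := mul_le_mul_of_nonneg_right (L.le_opNorm u) (norm_nonneg _)
  have b1 := babs p q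
  have b2 := babs q p
  have b3 := babs q q
  have hq2 : ‖q‖ ^ 2 ≤ K ^ 2 * ‖(y : Y)‖ ^ 2 := by nlinarith [norm_nonneg q, norm_nonneg (y : Y)]
  have hK2 : (0:ℝ) ≤ ‖L‖ := norm_nonneg _
  have key : δ / 2 * ‖p‖ ^ 2 - 2 / δ * ‖L‖ ^ 2 * ‖q‖ ^ 2 ≤ ⟪L p, p⟫ + ⟪L p, q⟫ + ⟪L q, p⟫ := by
    have habs1 : -(‖L‖ * ‖p‖ * ‖q‖) ≤ ⟪L p, q⟫ := neg_le_of_abs_le b1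
    have habs2 : -(‖L‖ * ‖q‖ * ‖p‖) ≤ ⟪L q, p⟫ := neg_le_of_abs_le b2
    have m1 := mul_le_mul_of_nonneg_left hLpp hδ.le
    have m2 := mul_le_mul_of_nonneg_left habs1 hδ.le
    have m3 := mul_le_mul_of_nonneg_left habs2 hδ.le
    have hdd : δ * (2 / δ * ‖L‖ ^ 2 * ‖q‖ ^ 2) = 2 * ‖L‖ ^ 2 * ‖q‖ ^ 2 := by
      field_simp
    have hkey : δ * (δ / 2 * ‖p‖ ^ 2 - (⟪L p, p⟫ + ⟪L p, q⟫ + ⟪L q, p⟫)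
        - 2 / δ * ‖L‖ ^ 2 * ‖q‖ ^ 2) ≤ δ * 0 := by
      have expand2 : δ * (δ / 2 * ‖p‖ ^ 2 - (⟪L p, p⟫ + ⟪L p, q⟫ + ⟪L q, p⟫)
          - 2 / δ * ‖L‖ ^ 2 * ‖q‖ ^ 2) = δ * (δ / 2 * ‖p‖ ^ 2)
          - δ * ⟪L p, p⟫ - δ * ⟪L p, q⟫ - δ * ⟪L q, p⟫
          - δ * (2 / δ * ‖L‖ ^ 2 * ‖q‖ ^ 2) := by ring
      rw [expand2, hdd, mul_zero]
      nlinarith [sq_nonneg (δ * ‖p‖ - 2 * ‖L‖ * ‖q‖)]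
    have := le_of_mul_le_mul_left hkey hδ
    linarith
  have key2 : -(‖L‖ * ‖q‖ ^ 2) ≤ ⟪L q, q⟫ := by
    have habs3 : -(‖L‖ * ‖q‖ * ‖q‖) ≤ ⟪L q, q⟫ := neg_le_of_abs_le b3
    nlinarith
  have hqA : 2 / δ * ‖L‖ ^ 2 * ‖q‖ ^ 2 ≤ 2 / δ * ‖L‖ ^ 2 * (K ^ 2 * ‖(y : Y)‖ ^ 2) :=
    mul_le_mul_of_nonneg_left hq2 (by positivity)
  have hqB : ‖L‖ * ‖q‖ ^ 2 ≤ ‖L‖ * (K ^ 2 * ‖(y : Y)‖ ^ 2) :=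
    mul_le_mul_of_nonneg_left hq2 hK2
  have hqC : δ / 2 * ‖q‖ ^ 2 ≤ δ / 2 * (K ^ 2 * ‖(y : Y)‖ ^ 2) :=
    mul_le_mul_of_nonneg_left hq2 (by positivity)
  rw [expand, hnorm]
  linarith [key, key2, hqA, hqB, hqC]

private lemma aux_coer_arith (dl c npsi nphi nw ipp : ℝ) (hδ : 0 < dl) (hc : 0 ≤ c)
    (hnw : nw * nw = npsi ^ 2 + nphi ^ 2)
    (hco : dl / 2 * nphi ^ 2 - c * npsi ^ 2 ≤ ipp) :
    min (dl / 2) 1 * nw * nw ≤ ipp + (c + 1) * npsi ^ 2 := by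
  have hmin1 : min (dl / 2) 1 ≤ dl / 2 := min_le_left _ _
  have hmin2 : min (dl / 2) 1 ≤ 1 := min_le_right _ _
  have h' : min (dl / 2) 1 * nw * nw
      = min (dl / 2) 1 * npsi ^ 2 + min (dl / 2) 1 * nphi ^ 2 := by
    rw [mul_assoc, hnw]; ring
  have m1 : min (dl / 2) 1 * nphi ^ 2 ≤ dl / 2 * nphi ^ 2 :=
    mul_le_mul_of_nonneg_right hmin1 (sq_nonneg _)
  have m2 : min (dl / 2) 1 * npsi ^ 2 ≤ 1 * npsi ^ 2 :=
    mul_le_mul_of_nonneg_right hmin2 (sq_nonneg _)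
  linarith

private lemma aux_surj
    {X Y : Type*} [NormedAddCommGroup X] [InnerProductSpace ℝ X] [CompleteSpace X]
    [NormedAddCommGroup Y] [InnerProductSpace ℝ Y] [CompleteSpace Y]
    (L : X →L[ℝ] X)
    (A : Y →ₗ.[ℝ] X)
    (hAdense : Dense (A.domain : Set Y))
    (hAclosed : A.IsClosed)
    (δ : ℝ) (hδ : 0 < δ)
    (c : ℝ) (hc : 0 ≤ c)
    (hco : ∀ y : A.domain, δ / 2 * ‖A y‖ ^ 2 - c * ‖(y : Y)‖ ^ 2 ≤ ⟪L (A y), A y⟫) :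
    ∀ f : Y, ∃ (u : A.domain) (h : L (A u) ∈ A.adjoint.domain),
      A.adjoint ⟨L (A u), h⟩ = f - (c + 1) • (u : Y) := by
  classical
  set e := WithLp.prodContinuousLinearEquiv 2 ℝ Y X with he
  set W : Submodule ℝ (WithLp 2 (Y × X)) := A.graph.comap (e : WithLp 2 (Y × X) →ₗ[ℝ] Y × X)
    with hW
  have hWclosed : IsClosed (W : Set (WithLp 2 (Y × X))) := by
    have : (W : Set (WithLp 2 (Y × X))) = ⇑e ⁻¹' (A.graph : Set (Y × X)) := rfl
    rw [this]
    exact hAclosed.preimage e.continuous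
  haveI : CompleteSpace W := hWclosed.completeSpace_coe
  -- component maps
  set ψ : W →L[ℝ] Y := (ContinuousLinearMap.fst ℝ Y X).comp
    ((e : WithLp 2 (Y × X) →L[ℝ] Y × X).comp W.subtypeL) with hψ
  set φ : W →L[ℝ] X := (ContinuousLinearMap.snd ℝ Y X).comp
    ((e : WithLp 2 (Y × X) →L[ℝ] Y × X).comp W.subtypeL) with hφ
  have hinner : ∀ w₁ w₂ : W, ⟪w₁, w₂⟫ = ⟪ψ w₁, ψ w₂⟫ + ⟪φ w₁, φ w₂⟫ := fun w₁ w₂ => rfl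
  have hmem : ∀ w : W, ∃ y : A.domain, (y : Y) = ψ w ∧ A y = φ w := by
    intro w
    have hw : e (w : WithLp 2 (Y × X)) ∈ A.graph := w.2
    rw [LinearPMap.mem_graph_iff] at hw
    exact hw
  have hmk : ∀ y : A.domain, e.symm ((y : Y), A y) ∈ W := by
    intro y
    simp only [hW, Submodule.mem_comap]
    have : (e : WithLp 2 (Y × X) →ₗ[ℝ] Y × X) (e.symm ((y : Y), A y)) = ((y : Y), A y) := by
      exact e.apply_symm_apply _
    rw [this]
    exact A.mem_graph y
  have hψmk : ∀ y : A.domain, ψ ⟨e.symm ((y : Y), A y), hmk y⟩ = (y : Y) := by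
    intro y
    show ((e (e.symm ((y : Y), A y))).1 : Y) = (y : Y)
    rw [e.apply_symm_apply]
  have hφmk : ∀ y : A.domain, φ ⟨e.symm ((y : Y), A y), hmk y⟩ = A y := by
    intro y
    show ((e (e.symm ((y : Y), A y))).2 : X) = A y
    rw [e.apply_symm_apply]
  clear_value φ ψ W e
  have hnw : ∀ w : W, ‖w‖ * ‖w‖ = ‖ψ w‖ ^ 2 + ‖φ w‖ ^ 2 := by
    intro w
    have h1 : ⟪w, w⟫ = ‖w‖ * ‖w‖ := real_inner_self_eq_norm_mul_norm w
    have h2 : ⟪ψ w, ψ w⟫ = ‖ψ w‖ ^ 2 := real_inner_self_eq_norm_sq _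
    have h3 : ⟪φ w, φ w⟫ = ‖φ w‖ ^ 2 := real_inner_self_eq_norm_sq _
    rw [← h1, hinner w w, h2, h3]
  have hψle : ∀ w : W, ‖ψ w‖ ≤ ‖w‖ := by
    intro w
    have := hnw w
    nlinarith [sq_nonneg (‖φ w‖), norm_nonneg w, norm_nonneg (ψ w)]
  have hφle : ∀ w : W, ‖φ w‖ ≤ ‖w‖ := by
    intro w
    have := hnw w
    nlinarith [sq_nonneg (‖ψ w‖), norm_nonneg w, norm_nonneg (φ w)]
  -- the bilinear form
  set Bl : W →ₗ[ℝ] W →ₗ[ℝ] ℝ := LinearMap.mk₂ ℝ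
      (fun w₁ w₂ => ⟪L (φ w₁), φ w₂⟫ + (c + 1) * ⟪ψ w₁, ψ w₂⟫)
      (fun m₁ m₂ n => by
        simp only [map_add, inner_add_left, inner_add_right]; ring)
      (fun r m n => by
        simp only [map_smul, real_inner_smul_left, smul_eq_mul]; ring)
      (fun m n₁ n₂ => by
        simp only [map_add, inner_add_left, inner_add_right]; ring)
      (fun r m n => by
        simp only [map_smul, real_inner_smul_right, smul_eq_mul]; ring) with hBl
  have hBlapp : ∀ w₁ w₂ : W, Bl w₁ w₂ = ⟪L (φ w₁), φ w₂⟫ + (c + 1) * ⟪ψ w₁, ψ w₂⟫ :=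
    fun w₁ w₂ => rfl
  set B : W →L[ℝ] W →L[ℝ] ℝ := Bl.mkContinuous₂ (‖L‖ + (c + 1)) (by
    intro w₁ w₂
    rw [hBlapp]
    have e1 : |⟪L (φ w₁), φ w₂⟫| ≤ ‖L‖ * ‖w₁‖ * ‖w₂‖ := by
      calc |⟪L (φ w₁), φ w₂⟫| ≤ ‖L (φ w₁)‖ * ‖φ w₂‖ := abs_real_inner_le_norm _ _
        _ ≤ (‖L‖ * ‖φ w₁‖) * ‖φ w₂‖ :=
            mul_le_mul_of_nonneg_right (L.le_opNorm _) (norm_nonneg _)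
        _ ≤ ‖L‖ * ‖w₁‖ * ‖w₂‖ := by
            have := hφle w₁
            have := hφle w₂
            have : ‖L‖ * ‖φ w₁‖ ≤ ‖L‖ * ‖w₁‖ :=
              mul_le_mul_of_nonneg_left (hφle w₁) (norm_nonneg L)
            exact mul_le_mul this (hφle w₂) (norm_nonneg _) (by positivity)
    have e2 : |(c + 1) * ⟪ψ w₁, ψ w₂⟫| ≤ (c + 1) * ‖w₁‖ * ‖w₂‖ := by
      rw [abs_mul, abs_of_nonneg (by linarith : (0:ℝ) ≤ c + 1)]
      calc (c + 1) * |⟪ψ w₁, ψ w₂⟫| ≤ (c + 1) * (‖ψ w₁‖ * ‖ψ w₂‖) :=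
            mul_le_mul_of_nonneg_left (abs_real_inner_le_norm _ _) (by linarith)
        _ ≤ (c + 1) * ‖w₁‖ * ‖w₂‖ := by
            have h1 := hψle w₁
            have h2 := hψle w₂
            have := mul_le_mul h1 h2 (norm_nonneg _) (norm_nonneg _)
            nlinarith [norm_nonneg (ψ w₂), norm_nonneg w₁]
    calc ‖⟪L (φ w₁), φ w₂⟫ + (c + 1) * ⟪ψ w₁, ψ w₂⟫‖
        ≤ |⟪L (φ w₁), φ w₂⟫| + |(c + 1) * ⟪ψ w₁, ψ w₂⟫| := abs_add_le _ _
      _ ≤ ‖L‖ * ‖w₁‖ * ‖w₂‖ + (c + 1) * ‖w₁‖ * ‖w₂‖ := add_le_add e1 e2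
      _ = (‖L‖ + (c + 1)) * ‖w₁‖ * ‖w₂‖ := by ring) with hB
  have hBapp : ∀ w₁ w₂ : W, B w₁ w₂ = ⟪L (φ w₁), φ w₂⟫ + (c + 1) * ⟪ψ w₁, ψ w₂⟫ :=
    fun w₁ w₂ => rfl
  clear_value B Bl
  -- coercivity
  have coercive : IsCoercive B := by
    refine ⟨min (δ / 2) 1, by positivity, fun w => ?_⟩
    obtain ⟨y, hy1, hy2⟩ := hmem w
    have hco' : δ / 2 * ‖φ w‖ ^ 2 - c * ‖ψ w‖ ^ 2 ≤ ⟪L (φ w), φ w⟫ := by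
      have := hco y
      rw [hy2, hy1] at this
      exact this
    have hψsq : ⟪ψ w, ψ w⟫ = ‖ψ w‖ ^ 2 := real_inner_self_eq_norm_sq _
    rw [hBapp, hψsq]
    exact aux_coer_arith δ c ‖ψ w‖ ‖φ w‖ ‖w‖ _ hδ hc (hnw w) hco'
  -- Lax-Milgram
  intro f
  set g : W := (ContinuousLinearMap.adjoint ψ) f with hg
  have hgw : ∀ w : W, ⟪g, w⟫ = ⟪f, ψ w⟫ := fun w =>
    ContinuousLinearMap.adjoint_inner_left ψ w f
  obtain ⟨u, hu⟩ := LinearMap.range_eq_top.mp coercive.range_eq_top g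
  have hBu : ∀ w : W, B u w = ⟪f, ψ w⟫ := by
    intro w
    have h1 : ⟪InnerProductSpace.continuousLinearMapOfBilin B u, w⟫ = B u w :=
      InnerProductSpace.continuousLinearMapOfBilin_apply B u w
    rw [← ContinuousLinearMap.coe_coe, hu] at h1
    rw [← h1, hgw]
  obtain ⟨yu, hyu1, hyu2⟩ := hmem u
  have key : ∀ z : A.domain, ⟪f - (c + 1) • (yu : Y), (z : Y)⟫ = ⟪L (A yu), A z⟫ := by
    intro z
    have h1 := hBu ⟨e.symm ((z : Y), A z), hmk z⟩
    rw [hBapp, hψmk z, hφmk z, ← hyu2, ← hyu1] at h1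
    rw [inner_sub_left, real_inner_smul_left]
    linarith
  have hmemadj : L (A yu) ∈ A.adjoint.domain :=
    LinearPMap.mem_adjoint_domain_of_exists _ ⟨f - (c + 1) • (yu : Y), fun z => key z⟩
  exact ⟨yu, hmemadj, LinearPMap.adjoint_apply_eq hAdense ⟨L (A yu), hmemadj⟩ (fun z => key z)⟩

private lemma aux_final
    {X Y : Type*} [NormedAddCommGroup X] [InnerProductSpace ℝ X] [CompleteSpace X]
    [NormedAddCommGroup Y] [InnerProductSpace ℝ Y] [CompleteSpace Y]
    (L : X →L[ℝ] X) (hL : IsSelfAdjoint L)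
    (A : Y →ₗ.[ℝ] X)
    (hAdense : Dense (A.domain : Set Y))
    (δ : ℝ) (hδ : 0 < δ)
    (c : ℝ) (hc : 0 ≤ c)
    (hco : ∀ y : A.domain, δ / 2 * ‖A y‖ ^ 2 - c * ‖(y : Y)‖ ^ 2 ≤ ⟪L (A y), A y⟫)
    (hsurjA : ∀ f : Y, ∃ (u : A.domain) (h : L (A u) ∈ A.adjoint.domain),
      A.adjoint ⟨L (A u), h⟩ = f - (c + 1) • (u : Y))
    (T : Y →ₗ.[ℝ] Y)
    (hTdom : ∀ y : Y, y ∈ T.domain ↔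
      ∃ hy : y ∈ A.domain, L (A ⟨y, hy⟩) ∈ A.adjoint.domain)
    (hTval : ∀ (y : T.domain) (hy : (y : Y) ∈ A.domain)
      (hLy : L (A ⟨(y : Y), hy⟩) ∈ A.adjoint.domain),
      T y = A.adjoint ⟨L (A ⟨(y : Y), hy⟩), hLy⟩) :
    T.adjoint = T := by
  have pairing : ∀ (x : A.adjoint.domain) (z : A.domain),
      ⟪A.adjoint x, (z : Y)⟫ = ⟪(x : X), A z⟫ :=
    LinearPMap.adjoint_isFormalAdjoint hAdense
  -- surjectivity of T + (c+1)
  have hsurj : ∀ f : Y, ∃ v : T.domain, T v + (c + 1) • (v : Y) = f := by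
    intro f
    obtain ⟨u, hmemadj, hval⟩ := hsurjA f
    have hudom : (u : Y) ∈ T.domain := (hTdom u).mpr ⟨u.2, hmemadj⟩
    refine ⟨⟨(u : Y), hudom⟩, ?_⟩
    have := hTval ⟨(u : Y), hudom⟩ u.2 hmemadj
    rw [this, hval]
    abel
  -- symmetry of T
  have hsym : T.IsFormalAdjoint T := by
    intro u v
    obtain ⟨hu, hLu⟩ := (hTdom u).mp u.2
    obtain ⟨hv, hLv⟩ := (hTdom v).mp v.2
    rw [hTval u hu hLu, hTval v hv hLv]
    have p1 := pairing ⟨L (A ⟨(u : Y), hu⟩), hLu⟩ ⟨(v : Y), hv⟩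
    have p2 := pairing ⟨L (A ⟨(v : Y), hv⟩), hLv⟩ ⟨(u : Y), hu⟩
    calc ⟪A.adjoint ⟨L (A ⟨(u : Y), hu⟩), hLu⟩, (v : Y)⟫
        = ⟪L (A ⟨(u : Y), hu⟩), A ⟨(v : Y), hv⟩⟫ := p1
      _ = ⟪A ⟨(u : Y), hu⟩, L (A ⟨(v : Y), hv⟩)⟫ := hL.isSymmetric _ _
      _ = ⟪L (A ⟨(v : Y), hv⟩), A ⟨(u : Y), hu⟩⟫ := real_inner_comm _ _
      _ = ⟪A.adjoint ⟨L (A ⟨(v : Y), hv⟩), hLv⟩, (u : Y)⟫ := p2.symm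
      _ = ⟪(u : Y), A.adjoint ⟨L (A ⟨(v : Y), hv⟩), hLv⟩⟫ := real_inner_comm _ _
  -- density of the domain of T
  have hbot : T.domainᗮ = ⊥ := by
    rw [Submodule.eq_bot_iff]
    intro x hx
    obtain ⟨v, hv⟩ := hsurj x
    obtain ⟨hvd, hLv⟩ := (hTdom v).mp v.2
    have hTvv : ⟪T v, (v : Y)⟫ = ⟪L (A ⟨(v : Y), hvd⟩), A ⟨(v : Y), hvd⟩⟫ := by
      rw [hTval v hvd hLv]
      exact pairing ⟨L (A ⟨(v : Y), hvd⟩), hLv⟩ ⟨(v : Y), hvd⟩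
    have hxv : ⟪T v + (c + 1) • (v : Y), (v : Y)⟫ = 0 := by
      rw [hv]
      rw [Submodule.mem_orthogonal] at hx
      rw [real_inner_comm]
      exact hx (v : Y) v.2
    have hexp : ⟪T v, (v : Y)⟫ + (c + 1) * ‖(v : Y)‖ ^ 2 = 0 := by
      rw [inner_add_left, real_inner_smul_left, real_inner_self_eq_norm_sq] at hxv
      linarith
    have hcov := hco ⟨(v : Y), hvd⟩
    have hv0 : (v : Y) = 0 := by
      have h1 : δ / 2 * ‖A ⟨(v : Y), hvd⟩‖ ^ 2 + ‖(v : Y)‖ ^ 2 ≤ 0 := by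
        rw [← hTvv] at hcov
        nlinarith [sq_nonneg ‖(v : Y)‖]
      have h2 : ‖(v : Y)‖ ^ 2 ≤ 0 := by nlinarith [sq_nonneg ‖A ⟨(v : Y), hvd⟩‖]
      have := norm_nonneg (v : Y)
      have : ‖(v : Y)‖ = 0 := by nlinarith
      exact norm_eq_zero.mp this
    have hTv0 : T v = 0 := by
      have hveq : v = (0 : T.domain) := Subtype.ext hv0
      rw [hveq]
      exact T.toFun.map_zero
    rw [← hv, hTv0, hv0, smul_zero, add_zero]
  have hTdense : Dense (T.domain : Set Y) := by
    rw [Submodule.dense_iff_topologicalClosure_eq_top,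
      ← Submodule.orthogonal_orthogonal_eq_closure, hbot, Submodule.bot_orthogonal_eq_top]
  -- conclusion
  have h1 : T ≤ T.adjoint := hsym.le_adjoint hTdense
  have hdomle : T.adjoint.domain ≤ T.domain := by
    intro u hu
    obtain ⟨v, hv⟩ := hsurj (T.adjoint ⟨u, hu⟩ + (c + 1) • u)
    have horth : ∀ f : Y, ⟪u - (v : Y), f⟫ = 0 := by
      intro f
      obtain ⟨y, hy⟩ := hsurj f
      rw [← hy]
      have e1 : ⟪u, T y⟫ = ⟪T.adjoint ⟨u, hu⟩, (y : Y)⟫ :=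
        (LinearPMap.adjoint_isFormalAdjoint hTdense ⟨u, hu⟩ y).symm
      have e2 : ⟪(v : Y), T y⟫ = ⟪T v, (y : Y)⟫ := (hsym v y).symm
      have e3 := congrArg (fun z => ⟪z, (y : Y)⟫) hv
      simp only [inner_add_left, real_inner_smul_left] at e3
      rw [inner_sub_left, inner_add_right, inner_add_right, real_inner_smul_right,
        real_inner_smul_right, e1, e2]
      linarith [e3]
    have : u - (v : Y) = 0 := by
      have := horth (u - (v : Y))
      rwa [inner_self_eq_zero] at this
    have : u = (v : Y) := by rwa [sub_eq_zero] at this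
    rw [this]
    exact v.2
  have h2 : T.adjoint ≤ T := by
    refine ⟨hdomle, fun x y hxy => ?_⟩
    exact (h1.2 hxy.symm).symm
  exact le_antisymm h2 h1

end AuxAdjointCompSelfAdjoint

/-- Let `X, Y` be real Hilbert spaces, `L : X → X` a bounded
self-adjoint operator, and `A : D(A) ⊂ Y → X` a densely defined closed operator whose
adjoint `A*` is also densely defined. Suppose there exist `δ > 0` and a closed subspace
`X₊ ⊂ X` such that `⟪Lx, x⟫ ≥ δ‖x‖²` for all `x ∈ X₊` and `X₊ᗮ ⊆ D(A*)`. Then the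
operator `A*LA`, defined on the natural domain `{y ∈ D(A) : L(Ay) ∈ D(A*)}` by
`y ↦ A*(L(Ay))`, is self-adjoint on `Y`. -/
theorem adjoint_comp_selfAdjoint_comp_isSelfAdjoint
    {X Y : Type*} [NormedAddCommGroup X] [InnerProductSpace ℝ X] [CompleteSpace X]
    [NormedAddCommGroup Y] [InnerProductSpace ℝ Y] [CompleteSpace Y]
    (L : X →L[ℝ] X) (hL : IsSelfAdjoint L)
    (A : Y →ₗ.[ℝ] X)
    (hAdense : Dense (A.domain : Set Y))
    (hAclosed : A.IsClosed)
    (hAadjDense : Dense ((A.adjoint).domain : Set X))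
    (δ : ℝ) (hδ : 0 < δ)
    (Xp : Submodule ℝ X) (hXpClosed : IsClosed (Xp : Set X))
    (hcoer : ∀ x ∈ Xp, δ * ‖x‖ ^ 2 ≤ ⟪L x, x⟫)
    (hperp : (Xpᗮ : Set X) ⊆ (A.adjoint.domain : Set X))
    (T : Y →ₗ.[ℝ] Y)
    (hTdom : ∀ y : Y, y ∈ T.domain ↔
      ∃ hy : y ∈ A.domain, L (A ⟨y, hy⟩) ∈ A.adjoint.domain)
    (hTval : ∀ (y : T.domain) (hy : (y : Y) ∈ A.domain)
      (hLy : L (A ⟨(y : Y), hy⟩) ∈ A.adjoint.domain),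
      T y = A.adjoint ⟨L (A ⟨(y : Y), hy⟩), hLy⟩) :
    T.adjoint = T := by
  obtain ⟨K, hK0, hβ⟩ := aux_bound_exists A hAdense Xp hperp
  obtain ⟨c, hc0, hco⟩ := aux_coercivity L A hAdense δ hδ Xp hXpClosed hcoer hperp K hK0 hβ
  have hsurjA := aux_surj L A hAdense hAclosed δ hδ c hc0 hco
  exact aux_final L hL A hAdense δ hδ c hc0 hco hsurjA T hTdom hTval
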